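/- Let φ be the morphism on {0, 1, 0', −1} defined by φ(0) = 0 1 0' −1, φ(1) = 0 1 −1 1, φ(0') = 0' −1 0 1, φ(−1) = 0' −1 1 −1, let τ be the coding with τ(0) = τ(0') = 0, τ(1) = 1, τ(−1) = −1, and let ψ be the morphism on {0, 1, −1} defined by ψ(0) = 0 1 0 −1, ψ(1) = 0 1 −1 1 0 −1, ψ(−1) = 1 −1. Then τ(φ^n(0)) = ψ^n(0) for all n ≥ 0. -/

import Mathlib

/-- The morphism `φ` on the alphabet `{0, 1, 0', -1}`, encoded as `Fin 4` with
`0 ↦ 0`, `1 ↦ 1`, `0' ↦ 2`, `-1 ↦ 3`. -/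
def phi : Fin 4 → List (Fin 4)
  | 0 => [0, 1, 2, 3]
  | 1 => [0, 1, 3, 1]
  | 2 => [2, 3, 0, 1]
  | 3 => [2, 3, 1, 3]

/-- The coding `τ` with `τ(0) = τ(0') = 0`, `τ(1) = 1`, `τ(-1) = -1`. -/
def tau : Fin 4 → ℤ
  | 0 => 0
  | 1 => 1
  | 2 => 0
  | 3 => -1

/-- The morphism `ψ` on the alphabet `{0, 1, -1} ⊆ ℤ`:
`ψ(0) = 0 1 0 -1`, `ψ(1) = 0 1 -1 1 0 -1`, `ψ(-1) = 1 -1`. -/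
def psi : ℤ → List ℤ := fun a =>
  if a = 0 then [0, 1, 0, -1]
  else if a = 1 then [0, 1, -1, 1, 0, -1]
  else if a = -1 then [1, -1]
  else []

/-- Extension of a map on letters to a morphism on words (`Fin 4` alphabet). -/
def ext (h : Fin 4 → List (Fin 4)) : List (Fin 4) → List (Fin 4) :=
  fun l => l.flatMap h

/-- Extension of a map on letters to a morphism on words (`ℤ` alphabet). -/
def extZ (h : ℤ → List ℤ) : List ℤ → List ℤ :=
  fun l => l.flatMap h

/-- Blocks: `Z = [0]`, `D = [1,3]`, `E = [1,2,3]`. -/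
def B : Fin 3 → List (Fin 4)
  | 0 => [0]
  | 1 => [1, 3]
  | 2 => [1, 2, 3]

/-- The induced morphism on blocks. -/
def M : Fin 3 → List (Fin 3)
  | 0 => [0, 2]
  | 1 => [0, 1, 2, 1]
  | 2 => [0, 1, 2, 0, 2, 1]

/-- Extension of the block map to words over blocks. -/
def extB : List (Fin 3) → List (Fin 4) := fun l => l.flatMap B

lemma phi_block (b : Fin 3) : ext phi (B b) = extB (M b) := by
  fin_cases b <;> rfl

lemma tau_phi_block (b : Fin 3) :
    (ext phi (B b)).map tau = extZ psi ((B b).map tau) := by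
  fin_cases b <;> rfl

lemma ext_append (h : Fin 4 → List (Fin 4)) (l₁ l₂ : List (Fin 4)) :
    ext h (l₁ ++ l₂) = ext h l₁ ++ ext h l₂ := List.flatMap_append ..

lemma extZ_append (h : ℤ → List ℤ) (l₁ l₂ : List ℤ) :
    extZ h (l₁ ++ l₂) = extZ h l₁ ++ extZ h l₂ := List.flatMap_append ..

lemma extB_append (l₁ l₂ : List (Fin 3)) :
    extB (l₁ ++ l₂) = extB l₁ ++ extB l₂ := List.flatMap_append ..

lemma phi_blocks (l : List (Fin 3)) :
    ext phi (extB l) = extB (l.flatMap M) := by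
  induction l with
  | nil => rfl
  | cons b l ih =>
      have : extB (b :: l) = B b ++ extB l := rfl
      rw [this, ext_append, phi_block, List.flatMap_cons, extB_append, ih]

lemma tau_phi_blocks (l : List (Fin 3)) :
    (ext phi (extB l)).map tau = extZ psi ((extB l).map tau) := by
  induction l with
  | nil => rfl
  | cons b l ih =>
      have h1 : extB (b :: l) = B b ++ extB l := rfl
      rw [h1, ext_append, List.map_append, List.map_append, extZ_append,
        tau_phi_block, ih]

lemma main : ∀ (n : ℕ) (l : List (Fin 3)),
    ((ext phi)^[n] (extB l)).map tau = (extZ psi)^[n] ((extB l).map tau) := by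
  intro n
  induction n with
  | zero => intro l; rfl
  | succ n ih =>
      intro l
      rw [Function.iterate_succ_apply, Function.iterate_succ_apply,
        ← tau_phi_blocks, phi_blocks, ih (l.flatMap M), ← phi_blocks,
        tau_phi_blocks]

/-- `τ(φⁿ(0)) = ψⁿ(0)` for all `n ≥ 0`. -/
theorem stmt_7 : ∀ n : ℕ, ((ext phi)^[n] [0]).map tau = (extZ psi)^[n] [0] := by
  intro n
  have h := main n [0]
  simpa [show extB [0] = [0] from rfl, show ([0] : List (Fin 4)).map tau = [0] from rfl,
    show tau 0 = 0 from rfl] using h
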